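/- Let C1 and C2 be two distinct rigidity circuits on a common finite vertex type with a common edge e ∈ C1 ∩ C2. Then the combinatorial resultant CRes(C1, C2, e) = (C1 ∪ C2) \ {e} has exactly 2|V(C1) ∪ V(C2)| − 2 edges if and only if the common subgraph (V(C1) ∩ V(C2), C1 ∩ C2) is Laman, i.e., C1 ∩ C2 is (2,3)-sparse and |C1 ∩ C2| = 2|V(C1) ∩ V(C2)| − 3. -/
import Mathlib


open Finset

variable {V : Type*} [Fintype V] [DecidableEq V]

/-- An edge set: a finite set of unordered pairs of distinct vertices (no loops). -/
def IsEdgeSet (E : Finset (Sym2 V)) : Prop := ∀ e ∈ E, ¬ e.IsDiag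

/-- The vertex span `V(E)`: vertices incident to at least one edge of `E`. -/
def vertexSpan (E : Finset (Sym2 V)) : Finset V :=
  Finset.univ.filter fun v => ∃ e ∈ E, v ∈ e

/-- `(2,3)`-sparsity: every nonempty subset `E' ⊆ E` has `|E'| ≤ 2|V(E')| - 3`. -/
def Sparse23 (E : Finset (Sym2 V)) : Prop :=
  ∀ E' ⊆ E, E'.Nonempty → (E'.card : ℤ) ≤ 2 * (vertexSpan E').card - 3

/-- An edge set is dependent if it is not `(2,3)`-sparse. -/
def DependentES (E : Finset (Sym2 V)) : Prop := ¬ Sparse23 E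

/-- A rigidity circuit: a dependent edge set all of whose proper subsets are `(2,3)`-sparse. -/
def IsRigidityCircuit (E : Finset (Sym2 V)) : Prop :=
  IsEdgeSet E ∧ DependentES E ∧ ∀ E' ⊂ E, Sparse23 E'

lemma vertexSpan_mono {E E' : Finset (Sym2 V)} (h : E' ⊆ E) :
    vertexSpan E' ⊆ vertexSpan E := by
  intro v hv
  simp only [vertexSpan, mem_filter, mem_univ, true_and] at *
  obtain ⟨f, hf, hvf⟩ := hv
  exact ⟨f, h hf, hvf⟩

lemma circuit_card {C : Finset (Sym2 V)} (hC : IsRigidityCircuit C) :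
    (C.card : ℤ) = 2 * (vertexSpan C).card - 2 := by
  obtain ⟨hES, hdep, hsp⟩ := hC
  have hlow : (C.card : ℤ) ≥ 2 * (vertexSpan C).card - 2 := by
    by_contra hlt
    push_neg at hlt
    apply hdep
    intro E' hE' hne
    rcases eq_or_ssubset_of_subset hE' with rfl | hss
    · linarith
    · exact hsp E' hss E' subset_rfl hne
  have hCne : C.Nonempty := by
    rcases C.eq_empty_or_nonempty with rfl | h
    · exact absurd (fun E' hE' hne => absurd hne (by simp [Finset.subset_empty.mp hE'])) hdep
    · exact h
  obtain ⟨f, hf⟩ := hCne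
  rcases (C \ {f}).eq_empty_or_nonempty with hemp | hne
  · -- C = {f}
    have hCf : C = {f} := by
      apply Finset.Subset.antisymm _ (singleton_subset_iff.mpr hf)
      intro g hg
      by_contra hgf
      have : g ∈ C \ {f} := mem_sdiff.mpr ⟨hg, by simpa using hgf⟩
      simp [hemp] at this
    induction f using Sym2.ind with
    | _ a b =>
      have hab : a ≠ b := by
        have := hES _ hf
        simpa [Sym2.isDiag_iff_proj_eq] using this
      have h2 : ({a, b} : Finset V) ⊆ vertexSpan C := by
        intro v hv
        simp only [vertexSpan, mem_filter, mem_univ, true_and]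
        refine ⟨_, hf, ?_⟩
        simp only [mem_insert, mem_singleton] at hv
        rcases hv with rfl | rfl <;> simp
      have hc2 : 2 ≤ (vertexSpan C).card := by
        calc 2 = ({a, b} : Finset V).card := by
              rw [card_insert_of_notMem (by simpa using hab), card_singleton]
        _ ≤ _ := card_le_card h2
      have hc1 : C.card = 1 := by rw [hCf]; simp
      omega
  · have hss : C \ {f} ⊂ C :=
      Finset.sdiff_ssubset (singleton_subset_iff.mpr hf) (singleton_nonempty f)
    have hupper := hsp _ hss _ Finset.Subset.rfl hne
    have hmono := card_le_card (vertexSpan_mono (Finset.sdiff_subset : C \ {f} ⊆ C))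
    have hcard : (C \ {f}).card = C.card - 1 := by
      rw [card_sdiff_of_subset (singleton_subset_iff.mpr hf)]; simp
    have hpos : 1 ≤ C.card := card_pos.mpr ⟨f, hf⟩
    omega

/-- The combinatorial resultant of two distinct rigidity circuits on a common edge has
exactly `2|V(C1) ∪ V(C2)| - 2` edges iff the common subgraph is Laman, i.e. `C1 ∩ C2` is
`(2,3)`-sparse with `|C1 ∩ C2| = 2|V(C1) ∩ V(C2)| - 3`. -/
theorem combinatorialResultant_card_iff_laman (C1 C2 : Finset (Sym2 V))
    (hC1 : IsRigidityCircuit C1) (hC2 : IsRigidityCircuit C2) (hne : C1 ≠ C2)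
    (e : Sym2 V) (he : e ∈ C1 ∩ C2) :
    ((((C1 ∪ C2) \ {e}).card : ℤ) = 2 * ((vertexSpan C1 ∪ vertexSpan C2).card : ℤ) - 2) ↔
      (Sparse23 (C1 ∩ C2) ∧
        ((C1 ∩ C2).card : ℤ) = 2 * ((vertexSpan C1 ∩ vertexSpan C2).card : ℤ) - 3) := by
  have h1 := circuit_card hC1
  have h2 := circuit_card hC2
  -- C1 ∩ C2 is a proper subset of C1, hence sparse
  have hproper : C1 ∩ C2 ⊂ C1 := by
    refine Finset.ssubset_iff_subset_ne.mpr ⟨inter_subset_left, fun h => ?_⟩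
    have hsub : C1 ⊆ C2 := by rw [← h]; exact inter_subset_right
    exact hC1.2.1 (hC2.2.2 C1 (ssubset_of_subset_of_ne hsub hne))
  have hsparse : Sparse23 (C1 ∩ C2) := hC1.2.2 _ hproper
  have heu : e ∈ C1 ∪ C2 := mem_union_left _ (mem_inter.mp he).1
  have hsd : ((C1 ∪ C2) \ {e}).card = (C1 ∪ C2).card - 1 := by
    rw [card_sdiff_of_subset (singleton_subset_iff.mpr heu)]; simp
  have hu : (C1 ∪ C2).card + (C1 ∩ C2).card = C1.card + C2.card :=
    card_union_add_card_inter C1 C2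
  have hv : (vertexSpan C1 ∪ vertexSpan C2).card + (vertexSpan C1 ∩ vertexSpan C2).card
      = (vertexSpan C1).card + (vertexSpan C2).card :=
    card_union_add_card_inter _ _
  have hpos : 1 ≤ (C1 ∪ C2).card := card_pos.mpr ⟨e, heu⟩
  constructor
  · intro h
    exact ⟨hsparse, by omega⟩
  · rintro ⟨-, h⟩
    omega
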